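/- For every pairwise reciprocal matrix A of size n ≥ 1, the Pseudo-IGM vector w* := (1/c) • (G⁻¹.mulVec 1), where c = ∑ᵢ ∑ⱼ (G⁻¹) i j, satisfies ∑ᵢ w* i = 1 and minimizes the WLS objective over the constraint set: for every w : Fin n → ℝ with ∑ᵢ w i = 1, one has f(w*) ≤ f(w). -/

import Mathlib

open Matrix BigOperators

/-- A pairwise reciprocal matrix (PRM): all entries positive and `A i j * A j i = 1`. -/
def IsPRM {n : ℕ} (A : Matrix (Fin n) (Fin n) ℝ) : Prop :=
  ∀ i j, 0 < A i j ∧ A i j * A j i = 1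

/-- The matrix `Ḡ` with diagonal `(n-1) + ∑_{k ≠ i} (A k i)^2` and
off-diagonal `-(A i j + A j i)`. -/
noncomputable def Gbar {n : ℕ} (A : Matrix (Fin n) (Fin n) ℝ) :
    Matrix (Fin n) (Fin n) ℝ :=
  Matrix.of fun i j =>
    if i = j then ((n : ℝ) - 1) + ∑ k ∈ Finset.univ.filter (fun k => k ≠ i), (A k i) ^ 2
    else -(A i j + A j i)

/-- The all-ones matrix `J`. -/
noncomputable def Jmat (n : ℕ) : Matrix (Fin n) (Fin n) ℝ :=
  Matrix.of fun _ _ => 1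

/-- `G = Ḡ + J`. -/
noncomputable def Gmat {n : ℕ} (A : Matrix (Fin n) (Fin n) ℝ) :
    Matrix (Fin n) (Fin n) ℝ :=
  Gbar A + Jmat n

/-- The weighted least squares objective `f(w) = ∑ i ∑ j (w i - A i j * w j)^2`. -/
noncomputable def wls {n : ℕ} (A : Matrix (Fin n) (Fin n) ℝ) (w : Fin n → ℝ) : ℝ :=
  ∑ i, ∑ j, (w i - A i j * w j) ^ 2
lemma prm_diag {n : ℕ} {A : Matrix (Fin n) (Fin n) ℝ} (hA : IsPRM A) (i : Fin n) :
    A i i = 1 := by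
  have h1 := (hA i i).1
  have h2 := (hA i i).2
  nlinarith

lemma gbar_eq {n : ℕ} {A : Matrix (Fin n) (Fin n) ℝ} (hA : IsPRM A) (i j : Fin n) :
    Gbar A i j = (if i = j then ((n : ℝ) + ∑ k, (A k i) ^ 2) else 0) - (A i j + A j i) := by
  by_cases h : i = j
  · subst h
    simp only [Gbar, Matrix.of_apply, if_pos rfl]
    rw [Finset.filter_ne', Finset.sum_erase_eq_sub (Finset.mem_univ i)]
    rw [prm_diag hA i]
    simp only [if_true]
    ring
  · simp only [Gbar, Matrix.of_apply, if_neg h]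
    ring

lemma quad_eq {n : ℕ} {A : Matrix (Fin n) (Fin n) ℝ} (hA : IsPRM A) (v : Fin n → ℝ) :
    ∑ i, ∑ j, Gmat A i j * v i * v j = wls A v + (∑ i, v i) ^ 2 := by
  have hswap1 : ∑ i, ∑ j, A j i * (v i * v j) = ∑ i, ∑ j, A i j * (v i * v j) := by
    rw [Finset.sum_comm]
    exact Finset.sum_congr rfl fun i _ => Finset.sum_congr rfl fun j _ => by ring
  have hswap2 : ∑ i, (∑ k, (A k i) ^ 2) * (v i) ^ 2 = ∑ i, ∑ j, (A i j) ^ 2 * (v j) ^ 2 := by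
    simp_rw [Finset.sum_mul]
    exact Finset.sum_comm
  have hJ : ∑ i, ∑ j, (Jmat n) i j * v i * v j = (∑ i, v i) ^ 2 := by
    simp only [Jmat, Matrix.of_apply, one_mul]
    rw [sq, Finset.sum_mul_sum]
  have hwls : wls A v = (n : ℝ) * (∑ i, (v i) ^ 2)
      - 2 * (∑ i, ∑ j, A i j * (v i * v j)) + ∑ i, ∑ j, (A i j) ^ 2 * (v j) ^ 2 := by
    unfold wls
    have : ∀ i j : Fin n, (v i - A i j * v j) ^ 2
        = (v i) ^ 2 - 2 * (A i j * (v i * v j)) + (A i j) ^ 2 * (v j) ^ 2 := by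
      intro i j; ring
    simp_rw [this, Finset.sum_add_distrib, Finset.sum_sub_distrib, Finset.sum_const,
      Finset.card_univ, Fintype.card_fin, nsmul_eq_mul, ← Finset.mul_sum]
  have hGbar : ∑ i, ∑ j, Gbar A i j * v i * v j
      = (n : ℝ) * (∑ i, (v i) ^ 2) + (∑ i, (∑ k, (A k i) ^ 2) * (v i) ^ 2)
        - (∑ i, ∑ j, A i j * (v i * v j)) - (∑ i, ∑ j, A j i * (v i * v j)) := by
    have hterm : ∀ i j : Fin n, Gbar A i j * v i * v j
        = (if i = j then ((n : ℝ) + ∑ k, (A k i) ^ 2) * (v i * v j) else 0)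
          - (A i j * (v i * v j) + A j i * (v i * v j)) := by
      intro i j
      rw [gbar_eq hA i j]
      by_cases h : i = j <;> simp [h] <;> ring
    simp_rw [hterm, Finset.sum_sub_distrib, Finset.sum_add_distrib, Finset.sum_ite_eq,
      Finset.mem_univ, if_true]
    have : ∑ i, ((n : ℝ) + ∑ k, (A k i) ^ 2) * (v i * v i)
        = (n : ℝ) * (∑ i, (v i) ^ 2) + ∑ i, (∑ k, (A k i) ^ 2) * (v i) ^ 2 := by
      rw [Finset.mul_sum, ← Finset.sum_add_distrib]
      exact Finset.sum_congr rfl fun i _ => by ring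
    rw [this]; ring
  have hG : ∀ i j, Gmat A i j = Gbar A i j + (Jmat n) i j := fun i j => rfl
  simp_rw [hG, add_mul, Finset.sum_add_distrib]
  rw [hGbar, hJ, hwls, hswap1, hswap2]
  ring

lemma wls_nonneg {n : ℕ} (A : Matrix (Fin n) (Fin n) ℝ) (v : Fin n → ℝ) : 0 ≤ wls A v := by
  unfold wls; positivity

lemma kernel_zero {n : ℕ} (hn : 1 ≤ n) {A : Matrix (Fin n) (Fin n) ℝ} (hA : IsPRM A)
    {v : Fin n → ℝ} (hw : wls A v = 0) (hs : ∑ i, v i = 0) : v = 0 := by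
  have hterm : ∀ i j : Fin n, v i = A i j * v j := by
    intro i j
    have h0 : ∀ i ∈ Finset.univ, (0:ℝ) ≤ ∑ j, (v i - A i j * v j) ^ 2 :=
      fun i _ => Finset.sum_nonneg fun j _ => sq_nonneg _
    have h1 : ∑ j, (v i - A i j * v j) ^ 2 = 0 :=
      (Finset.sum_eq_zero_iff_of_nonneg h0).mp hw i (Finset.mem_univ i)
    have h2 : (v i - A i j * v j) ^ 2 = 0 :=
      (Finset.sum_eq_zero_iff_of_nonneg (fun j _ => sq_nonneg _)).mp h1 j (Finset.mem_univ j)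
    have := (pow_eq_zero_iff two_ne_zero).mp h2
    linarith [sub_eq_zero.mp this]
  funext j
  have hsum : ∑ i, v i = (∑ i, A i j) * v j := by
    rw [Finset.sum_mul]
    exact Finset.sum_congr rfl fun i _ => hterm i j
  have hpos : 0 < ∑ i, A i j := by
    have : Nonempty (Fin n) := ⟨⟨0, hn⟩⟩
    exact Finset.sum_pos (fun i _ => (hA i j).1) Finset.univ_nonempty
  have : (∑ i, A i j) * v j = 0 := by rw [← hsum, hs]
  have := mul_eq_zero.mp this
  simp only [Pi.zero_apply]
  rcases this with h | h
  · exact absurd h hpos.ne'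
  · exact h

lemma gmat_sym {n : ℕ} {A : Matrix (Fin n) (Fin n) ℝ} (i j : Fin n) :
    Gmat A i j = Gmat A j i := by
  by_cases h : i = j
  · rw [h]
  · simp [Gmat, Gbar, Jmat, Matrix.add_apply, h, Ne.symm h]
    ring

lemma gmat_posdef {n : ℕ} (hn : 1 ≤ n) {A : Matrix (Fin n) (Fin n) ℝ} (hA : IsPRM A) :
    (Gmat A).PosDef := by
  refine Matrix.PosDef.of_dotProduct_mulVec_pos ?_ ?_
  · ext i j
    simp only [Matrix.conjTranspose_apply, star_trivial]
    exact gmat_sym j i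
  · intro x hx
    have hdp : star x ⬝ᵥ (Gmat A *ᵥ x) = ∑ i, ∑ j, Gmat A i j * x i * x j := by
      simp only [star_trivial, dotProduct, Matrix.mulVec, Finset.mul_sum]
      exact Finset.sum_congr rfl fun i _ => Finset.sum_congr rfl fun j _ => by ring
    rw [hdp, quad_eq hA]
    rcases lt_or_eq_of_le (add_nonneg (wls_nonneg A x) (sq_nonneg (∑ i, x i))) with h | h
    · exact h
    · exfalso
      have h1 : wls A x = 0 := by nlinarith [wls_nonneg A x, sq_nonneg (∑ i, x i)]
      have h2 : ∑ i, x i = 0 := by nlinarith [wls_nonneg A x, sq_nonneg (∑ i, x i)]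
      exact hx (kernel_zero hn hA h1 h2)

/-- the Pseudo-IGM vector `w* = (1/c) • (G⁻¹.mulVec 1)` with
`c = ∑ i ∑ j (G⁻¹) i j` sums to 1 and minimizes the WLS objective over the
constraint set `{w : ∑ i, w i = 1}`. -/
theorem pigm_sums_to_one_and_minimizes {n : ℕ} (hn : 1 ≤ n)
    (A : Matrix (Fin n) (Fin n) ℝ) (hA : IsPRM A) :
    let c : ℝ := ∑ i, ∑ j, (Gmat A)⁻¹ i j
    let wstar : Fin n → ℝ := (1 / c) • ((Gmat A)⁻¹.mulVec 1)
    (∑ i, wstar i = 1) ∧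
    ∀ w : Fin n → ℝ, (∑ i, w i = 1) → wls A wstar ≤ wls A w := by
  intro c wstar
  have hpd := gmat_posdef hn hA
  have hdet : IsUnit (Gmat A).det := hpd.det_pos.ne'.isUnit
  have hGG : Gmat A * (Gmat A)⁻¹ = 1 := Matrix.mul_nonsing_inv _ hdet
  set u : Fin n → ℝ := (Gmat A)⁻¹.mulVec 1 with hu
  have hmul : (Gmat A).mulVec u = 1 := by
    rw [hu, Matrix.mulVec_mulVec, hGG, Matrix.one_mulVec]
  have hc_sum : ∑ i, u i = c := by
    simp [hu, Matrix.mulVec, dotProduct, c]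
  have hquad_u : ∑ i, ∑ j, Gmat A i j * u i * u j = c := by
    have : ∀ i : Fin n, ∑ j, Gmat A i j * u i * u j = u i * ((Gmat A).mulVec u i) := by
      intro i
      simp only [Matrix.mulVec, dotProduct, Finset.mul_sum]
      exact Finset.sum_congr rfl fun j _ => by ring
    simp_rw [this, hmul]
    simpa using hc_sum
  have hc_pos : 0 < c := by
    have hge : c ≥ 0 := by
      rw [← hquad_u, quad_eq hA]
      exact add_nonneg (wls_nonneg A u) (sq_nonneg _)
    rcases lt_or_eq_of_le hge with h | h
    · exact h
    · exfalso
      have hq : wls A u + (∑ i, u i) ^ 2 = 0 := by rw [← quad_eq hA, hquad_u, ← h]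
      have h1 : wls A u = 0 := by nlinarith [wls_nonneg A u, sq_nonneg (∑ i, u i)]
      have h2 : ∑ i, u i = 0 := by nlinarith [wls_nonneg A u, sq_nonneg (∑ i, u i)]
      have hu0 : u = 0 := kernel_zero hn hA h1 h2
      have : (1 : Fin n → ℝ) = 0 := by rw [← hmul, hu0, Matrix.mulVec_zero]
      exact one_ne_zero (congrFun this ⟨0, hn⟩)
  have hws : ∀ i, wstar i = (1 / c) * u i := fun i => rfl
  have hsumstar : ∑ i, wstar i = 1 := by
    simp_rw [hws, ← Finset.mul_sum, hc_sum]
    field_simp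
  refine ⟨hsumstar, ?_⟩
  intro w hw
  have hGws : (Gmat A).mulVec wstar = (1 / c) • (1 : Fin n → ℝ) := by
    show (Gmat A).mulVec ((1 / c) • u) = _
    rw [Matrix.mulVec_smul, hmul]
  set d : Fin n → ℝ := w - wstar with hd
  have hdw : ∀ i, w i = d i + wstar i := fun i => by simp [hd]
  have hsd : ∑ i, d i = 0 := by
    simp only [hd, Pi.sub_apply, Finset.sum_sub_distrib, hw, hsumstar, sub_self]
  have hcross : ∑ i, ∑ j, Gmat A i j * d i * wstar j = 0 := by
    have : ∀ i : Fin n, ∑ j, Gmat A i j * d i * wstar j = d i * ((Gmat A).mulVec wstar i) := by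
      intro i
      simp only [Matrix.mulVec, dotProduct, Finset.mul_sum]
      exact Finset.sum_congr rfl fun j _ => by ring
    simp_rw [this, hGws]
    simp only [Pi.smul_apply, Pi.one_apply, smul_eq_mul, mul_one, ← Finset.mul_sum,
      ← Finset.sum_mul, hsd, zero_mul, mul_zero]
  have hcross2 : ∑ i, ∑ j, Gmat A i j * wstar i * d j = 0 := by
    rw [Finset.sum_comm]
    rw [← hcross]
    exact Finset.sum_congr rfl fun i _ => Finset.sum_congr rfl fun j _ => by
      rw [gmat_sym j i]; ring
  have hexp : ∑ i, ∑ j, Gmat A i j * w i * w j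
      = (∑ i, ∑ j, Gmat A i j * d i * d j) + (∑ i, ∑ j, Gmat A i j * wstar i * wstar j) := by
    have hterm : ∀ i j : Fin n, Gmat A i j * w i * w j
        = Gmat A i j * d i * d j + Gmat A i j * d i * wstar j
          + Gmat A i j * wstar i * d j + Gmat A i j * wstar i * wstar j := by
      intro i j
      rw [hdw i, hdw j]; ring
    simp_rw [hterm, Finset.sum_add_distrib]
    rw [hcross, hcross2]; ring
  have hdquad : 0 ≤ ∑ i, ∑ j, Gmat A i j * d i * d j := by
    rw [quad_eq hA]
    exact add_nonneg (wls_nonneg A d) (sq_nonneg _)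
  have e1 := quad_eq hA w
  have e2 := quad_eq hA wstar
  rw [hw] at e1
  rw [hsumstar] at e2
  rw [e1, e2] at hexp
  linarith
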